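/- Empirical-measure fluctuation estimate (Lemma before Theorem 2.9, inequality (RR1)): There is a universal constant C > 0 with the following property. Let ξ₁, …, ξ_N be i.i.d. ℝ^d-valued random variables with common law μ, let μ_{ξ^N} := (1/N) Σ_{j=1}^N δ_{ξ_j} be their empirical measure, let μ̄ be any Borel probability measure on ℝ^d, and let f : ℝ^d × ℝ^d → [0,∞) be measurable. Writing f(x, η) := ∫_{ℝ^d} f(x,y) η(dy) for a probability measure η, one has for every i = 1, …, N (the inequality being in [0,∞]): E| f(ξ_i, μ_{ξ^N}) − f(ξ_i, μ̄) |² ≤ C [ ∫_{ℝ^d} (f(x,μ) − f(x,μ̄))² μ(dx) + (1/N) ∫_{ℝ^d}∫_{ℝ^d} f(x,y)² μ(dx) μ(dy) + (1/N) ∫_{ℝ^d} ( ∫_{ℝ^d} f(x,y) μ̄(dy) )² μ(dx) + (1/N) ∫_{ℝ^d} f(x,x)² μ(dx) ]. In particular, taking μ̄ = μ, E| f(ξ_i, μ_{ξ^N}) − f(ξ_i, μ) |² ≤ (C/N) ( ∫∫ f(x,y)² μ(dx)μ(dy) + ∫ f(x,x)² μ(dx) ). -/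

import Mathlib

open MeasureTheory ProbabilityTheory
open scoped ENNReal

noncomputable section
universe u

variable {α : Type*} [MeasurableSpace α] {μ : Measure α}

lemma aux_integrable_of_lintegral {φ : α → ℝ} (hφ : Measurable φ) (h0 : ∀ x, 0 ≤ φ x)
    (hlt : ∫⁻ x, ENNReal.ofReal (φ x) ∂μ ≠ ⊤) : Integrable φ μ :=
  ⟨hφ.aestronglyMeasurable,
    (hasFiniteIntegral_iff_ofReal (ae_of_all _ h0)).2 (lt_top_iff_ne_top.2 hlt)⟩

lemma aux_sq_lintegral [IsProbabilityMeasure μ] {g : α → ℝ≥0∞} (hg : AEMeasurable g μ) :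
    (∫⁻ x, g x ∂μ) ^ 2 ≤ ∫⁻ x, (g x) ^ 2 ∂μ := by
  have h := ENNReal.lintegral_mul_le_Lp_mul_Lq μ (p := 2) (q := 2)
    Real.HolderConjugate.two_two hg (aemeasurable_const (b := (1 : ℝ≥0∞)))
  simp only [mul_one, ENNReal.one_rpow, lintegral_const, measure_univ, mul_one,
    ENNReal.one_rpow, one_mul] at h
  have h2 : ∫⁻ x, g x ∂μ ≤ (∫⁻ x, (g x) ^ 2 ∂μ) ^ (1/2 : ℝ) := by
    simpa [ENNReal.rpow_two] using h
  calc (∫⁻ x, g x ∂μ) ^ 2 ≤ ((∫⁻ x, (g x) ^ 2 ∂μ) ^ (1/2 : ℝ)) ^ 2 :=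
        pow_le_pow_left₀ (by positivity) h2 2
    _ = ∫⁻ x, (g x) ^ 2 ∂μ := by
        rw [← ENNReal.rpow_natCast (((∫⁻ x, (g x) ^ 2 ∂μ)) ^ (1/2 : ℝ)) 2,
          ← ENNReal.rpow_mul]
        norm_num

lemma aux_jensen [IsProbabilityMeasure μ] {φ : α → ℝ} (hφ : Measurable φ)
    (h0 : ∀ x, 0 ≤ φ x) :
    ENNReal.ofReal ((∫ x, φ x ∂μ) ^ 2) ≤ ∫⁻ x, ENNReal.ofReal ((φ x) ^ 2) ∂μ := by
  by_cases hint : Integrable φ μ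
  · have h1 : ENNReal.ofReal (∫ x, φ x ∂μ) = ∫⁻ x, ENNReal.ofReal (φ x) ∂μ :=
      ofReal_integral_eq_lintegral_ofReal hint (ae_of_all _ h0)
    calc ENNReal.ofReal ((∫ x, φ x ∂μ) ^ 2)
        = (ENNReal.ofReal (∫ x, φ x ∂μ)) ^ 2 :=
          ENNReal.ofReal_pow (integral_nonneg h0) 2
      _ = (∫⁻ x, ENNReal.ofReal (φ x) ∂μ) ^ 2 := by rw [h1]
      _ ≤ ∫⁻ x, (ENNReal.ofReal (φ x)) ^ 2 ∂μ :=
          aux_sq_lintegral (by fun_prop)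
      _ = ∫⁻ x, ENNReal.ofReal ((φ x) ^ 2) ∂μ := by
          simp_rw [← ENNReal.ofReal_pow (h0 _)]
  · rw [integral_undef hint]; simp

lemma aux_integrable_dirac [MeasurableSingletonClass α] {φ : α → ℝ} (hφ : Measurable φ)
    (a : α) : Integrable φ (Measure.dirac a) :=
  ⟨hφ.aestronglyMeasurable, by
    simp only [HasFiniteIntegral, lintegral_dirac]
    exact ENNReal.coe_lt_top⟩

lemma aux_ofReal_sq_add3 (a b c : ℝ) :
    ENNReal.ofReal ((a + b + c) ^ 2) ≤
      3 * ENNReal.ofReal (a ^ 2) + 3 * ENNReal.ofReal (b ^ 2) + 3 * ENNReal.ofReal (c ^ 2) := by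
  have h : (a + b + c) ^ 2 ≤ 3 * a ^ 2 + 3 * b ^ 2 + 3 * c ^ 2 := by
    nlinarith [sq_nonneg (a-b), sq_nonneg (b-c), sq_nonneg (a-c)]
  calc ENNReal.ofReal ((a + b + c) ^ 2)
      ≤ ENNReal.ofReal (3 * a ^ 2 + 3 * b ^ 2 + 3 * c ^ 2) := ENNReal.ofReal_le_ofReal h
    _ ≤ 3 * ENNReal.ofReal (a ^ 2) + 3 * ENNReal.ofReal (b ^ 2) + 3 * ENNReal.ofReal (c ^ 2) := by
        refine le_trans (ENNReal.ofReal_add_le) (add_le_add (le_trans ENNReal.ofReal_add_le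
          (add_le_add ?_ ?_)) ?_) <;>
        · rw [ENNReal.ofReal_mul (by norm_num)]
          gcongr
          simp [ENNReal.ofReal_ofNat]

lemma aux_variance_le [IsProbabilityMeasure μ] {φ : α → ℝ} (h1 : Integrable φ μ)
    (h2 : Integrable (fun y => φ y ^ 2) μ) :
    ∫ y, (φ y - ∫ z, φ z ∂μ) ^ 2 ∂μ ≤ ∫ y, φ y ^ 2 ∂μ := by
  set c := ∫ z, φ z ∂μ with hc
  have hfun : (fun y => (φ y - c) ^ 2) = fun y => φ y ^ 2 - (2 * c * φ y - c ^ 2) := by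
    funext y; ring
  have hsub : Integrable (fun y => 2 * c * φ y - c ^ 2) μ :=
    (h1.const_mul (2 * c)).sub (integrable_const _)
  rw [hfun, integral_sub h2 hsub,
    integral_sub (h1.const_mul (2 * c)) (integrable_const _), integral_const_mul, integral_const]
  simp only [measure_univ, probReal_univ, ENNReal.toReal_one, smul_eq_mul, one_mul, ← hc]
  nlinarith [sq_nonneg c]

/-- **Empirical-measure fluctuation estimate (inequality (RR1) and its particular case
(Le19)).** There is a universal constant `C > 0` such that for i.i.d. random variables
`ξ₁,…,ξ_N` with law `μ`, any probability measure `μ̄`, any nonnegative measurable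
`f : ℝ^d × ℝ^d → [0,∞)` and any `i`, writing `f(x,η) := ∫ f(x,y) η(dy)`,
`E|f(ξ_i, μ_{ξ^N}) − f(ξ_i, μ̄)|²` is bounded (in `[0,∞]`) by the four-term expression,
and in particular (taking `μ̄ = μ`) by `(C/N)(∬ f² dμ dμ + ∫ f(x,x)² μ(dx))`. -/
theorem empirical_measure_fluctuation :
    ∃ C : ℝ, 0 < C ∧
      ∀ (d N : ℕ) (Ω : Type u) (_ : MeasurableSpace Ω) (P : Measure Ω),
        IsProbabilityMeasure P →
        ∀ ξ : Fin N → Ω → EuclideanSpace ℝ (Fin d),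
          (∀ j, Measurable (ξ j)) →
          iIndepFun ξ P →
          ∀ μ : Measure (EuclideanSpace ℝ (Fin d)), IsProbabilityMeasure μ →
            (∀ j, P.map (ξ j) = μ) →
            ∀ μbar : Measure (EuclideanSpace ℝ (Fin d)), IsProbabilityMeasure μbar →
              ∀ f : EuclideanSpace ℝ (Fin d) → EuclideanSpace ℝ (Fin d) → ℝ,
                Measurable (Function.uncurry f) →
                (∀ x y, 0 ≤ f x y) →
                ∀ i : Fin N,
                  (∫⁻ ω, ENNReal.ofReal
                      (((∫ y, f (ξ i ω) y
                            ∂((N : ℝ≥0∞)⁻¹ • ∑ j : Fin N, Measure.dirac (ξ j ω))) -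
                          ∫ y, f (ξ i ω) y ∂μbar) ^ 2) ∂P
                    ≤ ENNReal.ofReal C *
                        ((∫⁻ x, ENNReal.ofReal
                            (((∫ y, f x y ∂μ) - ∫ y, f x y ∂μbar) ^ 2) ∂μ) +
                          (N : ℝ≥0∞)⁻¹ *
                            ∫⁻ x, (∫⁻ y, ENNReal.ofReal ((f x y) ^ 2) ∂μ) ∂μ +
                          (N : ℝ≥0∞)⁻¹ *
                            ∫⁻ x, ENNReal.ofReal ((∫ y, f x y ∂μbar) ^ 2) ∂μ +
                          (N : ℝ≥0∞)⁻¹ * ∫⁻ x, ENNReal.ofReal ((f x x) ^ 2) ∂μ)) ∧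
                  (∫⁻ ω, ENNReal.ofReal
                      (((∫ y, f (ξ i ω) y
                            ∂((N : ℝ≥0∞)⁻¹ • ∑ j : Fin N, Measure.dirac (ξ j ω))) -
                          ∫ y, f (ξ i ω) y ∂μ) ^ 2) ∂P
                    ≤ ENNReal.ofReal C * (N : ℝ≥0∞)⁻¹ *
                        ((∫⁻ x, (∫⁻ y, ENNReal.ofReal ((f x y) ^ 2) ∂μ) ∂μ) +
                          ∫⁻ x, ENNReal.ofReal ((f x x) ^ 2) ∂μ)) := by
  classical
  refine ⟨100, by norm_num, ?_⟩
  intro d N Ω mΩ P hP ξ hξm hindep μ hμ hlaw μbar hμbar f hf hf0 i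
  have hN : 0 < N := i.pos
  have hNR : (0:ℝ) < (N:ℝ) := by exact_mod_cast hN
  set g : EuclideanSpace ℝ (Fin d) → ℝ := fun x => ∫ y, f x y ∂μ with hg_def
  have hgm : Measurable g := (hf.stronglyMeasurable.integral_prod_right').measurable
  set A := ∫⁻ x, (∫⁻ y, ENNReal.ofReal ((f x y)^2) ∂μ) ∂μ with hA_def
  set B := ∫⁻ x, ENNReal.ofReal ((f x x)^2) ∂μ with hB_def
  -- empirical measure integral as a finite sum
  have hemp : ∀ ω, (∫ y, f (ξ i ω) y
      ∂((N : ℝ≥0∞)⁻¹ • ∑ j : Fin N, Measure.dirac (ξ j ω)))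
      = (N:ℝ)⁻¹ * ∑ j : Fin N, f (ξ i ω) (ξ j ω) := by
    intro ω
    rw [integral_smul_measure,
      integral_finset_sum_measure (fun j _ => aux_integrable_dirac hf.of_uncurry_left _)]
    simp only [integral_dirac, ENNReal.toReal_inv, ENNReal.toReal_natCast, smul_eq_mul]
  -- the key estimate
  have key : ∀ ν : Measure (EuclideanSpace ℝ (Fin d)), IsProbabilityMeasure ν →
      (∫⁻ ω, ENNReal.ofReal
          (((∫ y, f (ξ i ω) y ∂((N : ℝ≥0∞)⁻¹ • ∑ j : Fin N, Measure.dirac (ξ j ω))) -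
            ∫ y, f (ξ i ω) y ∂ν) ^ 2) ∂P)
        ≤ 3 * (∫⁻ x, ENNReal.ofReal (((∫ y, f x y ∂μ) - ∫ y, f x y ∂ν) ^ 2) ∂μ)
          + 9 * ((N : ℝ≥0∞)⁻¹ * A) + 6 * ((N : ℝ≥0∞)⁻¹ * B) := by
    intro ν hν
    set h : EuclideanSpace ℝ (Fin d) → ℝ := fun x => ∫ y, f x y ∂ν with hh_def
    have hhm : Measurable h := (hf.stronglyMeasurable.integral_prod_right').measurable
    set D := ∫⁻ x, ENNReal.ofReal ((g x - h x) ^ 2) ∂μ with hD_def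
    by_cases hA : A = ⊤
    · have h1 : (N : ℝ≥0∞)⁻¹ * A = ⊤ := by
        rw [hA]; exact ENNReal.mul_top (by simp)
      rw [h1]
      simp
    -- abbreviations
    set T1 : Ω → ℝ := fun ω => g (ξ i ω) - h (ξ i ω) with hT1_def
    set T2 : Ω → ℝ := fun ω =>
      (N:ℝ)⁻¹ * ∑ j ∈ Finset.univ.erase i, (f (ξ i ω) (ξ j ω) - g (ξ i ω)) with hT2_def
    set T3 : Ω → ℝ := fun ω => (N:ℝ)⁻¹ * (f (ξ i ω) (ξ i ω) - g (ξ i ω)) with hT3_def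
    have hcard : ((Finset.univ.erase i).card : ℝ) = (N:ℝ) - 1 := by
      rw [Finset.card_erase_of_mem (Finset.mem_univ i)]
      simp only [Finset.card_univ, Fintype.card_fin]
      rw [Nat.cast_sub hN]
      simp
    have hdecomp : ∀ ω, (∫ y, f (ξ i ω) y
        ∂((N : ℝ≥0∞)⁻¹ • ∑ j : Fin N, Measure.dirac (ξ j ω))) - h (ξ i ω)
        = T1 ω + T2 ω + T3 ω := by
      intro ω
      rw [hemp ω, ← Finset.sum_erase_add _ _ (Finset.mem_univ i)]
      simp only [hT1_def, hT2_def, hT3_def, Finset.sum_sub_distrib, Finset.sum_const,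
        nsmul_eq_mul, hcard]
      have hNne : (N:ℝ) ≠ 0 := ne_of_gt hNR
      field_simp
      ring
    -- measurability of the pieces
    have hfij : ∀ j : Fin N, Measurable fun ω => f (ξ i ω) (ξ j ω) :=
      fun j => hf.comp ((hξm i).prodMk (hξm j))
    have hgi : Measurable fun ω => g (ξ i ω) := hgm.comp (hξm i)
    have hhi : Measurable fun ω => h (ξ i ω) := hhm.comp (hξm i)
    have hT1m : Measurable T1 := hgi.sub hhi
    have hT2m : Measurable T2 :=
      (measurable_const.mul (Finset.measurable_sum _ (fun j _ => (hfij j).sub hgi)))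
    have hT3m : Measurable T3 := measurable_const.mul ((hfij i).sub hgi)
    -- the three separate estimates
    have hI1 : ∫⁻ ω, ENNReal.ofReal (T1 ω ^ 2) ∂P = D := by
      calc ∫⁻ ω, ENNReal.ofReal (T1 ω ^ 2) ∂P
          = ∫⁻ x, ENNReal.ofReal ((g x - h x) ^ 2) ∂(P.map (ξ i)) :=
            (lintegral_map (((hgm.sub hhm).pow_const 2).ennreal_ofReal) (hξm i)).symm
        _ = D := by rw [hlaw i]
    have hI3 : ∫⁻ ω, ENNReal.ofReal (T3 ω ^ 2) ∂P
        ≤ 2 * ((N : ℝ≥0∞)⁻¹ * B) + 2 * ((N : ℝ≥0∞)⁻¹ * A) := by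
      have hdiagm : Measurable (fun x : EuclideanSpace ℝ (Fin d) => f x x) :=
        hf.comp (measurable_id.prodMk measurable_id)
      have hptw : ∀ ω, ENNReal.ofReal (T3 ω ^ 2)
          ≤ 2 * (N : ℝ≥0∞)⁻¹ * ENNReal.ofReal ((f (ξ i ω) (ξ i ω)) ^ 2)
            + 2 * (N : ℝ≥0∞)⁻¹ * ENNReal.ofReal ((g (ξ i ω)) ^ 2) := by
        intro ω
        set u := f (ξ i ω) (ξ i ω) with hu
        set v := g (ξ i ω) with hv
        have h2 : (0:ℝ) ≤ (N:ℝ)⁻¹ := by positivity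
        have h1 : (N:ℝ)⁻¹ ≤ 1 := by
          rw [inv_le_one_iff₀]
          right
          exact_mod_cast hN
        have hr : ((N:ℝ)⁻¹ * (u - v)) ^ 2 ≤ (N:ℝ)⁻¹ * (2 * u ^ 2 + 2 * v ^ 2) := by
          nlinarith [mul_nonneg (mul_nonneg h2 (sub_nonneg.2 h1)) (sq_nonneg (u - v)),
            mul_nonneg h2 (sq_nonneg (u + v)), sq_nonneg (u - v)]
        calc ENNReal.ofReal (T3 ω ^ 2)
            ≤ ENNReal.ofReal ((N:ℝ)⁻¹ * (2 * u ^ 2 + 2 * v ^ 2)) :=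
              ENNReal.ofReal_le_ofReal hr
          _ = (N : ℝ≥0∞)⁻¹ * (2 * ENNReal.ofReal (u ^ 2) + 2 * ENNReal.ofReal (v ^ 2)) := by
              rw [ENNReal.ofReal_mul h2, ENNReal.ofReal_add (by positivity) (by positivity),
                ENNReal.ofReal_mul (by norm_num), ENNReal.ofReal_mul (by norm_num),
                ENNReal.ofReal_inv_of_pos hNR, ENNReal.ofReal_natCast, ENNReal.ofReal_ofNat]
          _ = 2 * (N : ℝ≥0∞)⁻¹ * ENNReal.ofReal (u ^ 2)
                + 2 * (N : ℝ≥0∞)⁻¹ * ENNReal.ofReal (v ^ 2) := by ring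
      have hmap1 : ∫⁻ ω, ENNReal.ofReal ((f (ξ i ω) (ξ i ω)) ^ 2) ∂P = B := by
        calc ∫⁻ ω, ENNReal.ofReal ((f (ξ i ω) (ξ i ω)) ^ 2) ∂P
            = ∫⁻ x, ENNReal.ofReal ((f x x) ^ 2) ∂(P.map (ξ i)) :=
              (lintegral_map ((hdiagm.pow_const 2).ennreal_ofReal) (hξm i)).symm
          _ = B := by rw [hlaw i]
      have hmap2 : ∫⁻ ω, ENNReal.ofReal ((g (ξ i ω)) ^ 2) ∂P
          = ∫⁻ x, ENNReal.ofReal ((g x) ^ 2) ∂μ := by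
        calc ∫⁻ ω, ENNReal.ofReal ((g (ξ i ω)) ^ 2) ∂P
            = ∫⁻ x, ENNReal.ofReal ((g x) ^ 2) ∂(P.map (ξ i)) :=
              (lintegral_map ((hgm.pow_const 2).ennreal_ofReal) (hξm i)).symm
          _ = _ := by rw [hlaw i]
      have hjen : ∫⁻ x, ENNReal.ofReal ((g x) ^ 2) ∂μ ≤ A :=
        lintegral_mono fun x => aux_jensen hf.of_uncurry_left (hf0 x)
      calc ∫⁻ ω, ENNReal.ofReal (T3 ω ^ 2) ∂P
          ≤ ∫⁻ ω, (2 * (N : ℝ≥0∞)⁻¹ * ENNReal.ofReal ((f (ξ i ω) (ξ i ω)) ^ 2)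
              + 2 * (N : ℝ≥0∞)⁻¹ * ENNReal.ofReal ((g (ξ i ω)) ^ 2)) ∂P :=
            lintegral_mono hptw
        _ = 2 * (N : ℝ≥0∞)⁻¹ * ∫⁻ ω, ENNReal.ofReal ((f (ξ i ω) (ξ i ω)) ^ 2) ∂P
              + 2 * (N : ℝ≥0∞)⁻¹ * ∫⁻ ω, ENNReal.ofReal ((g (ξ i ω)) ^ 2) ∂P := by
            rw [lintegral_add_right _ ((((hgi).pow_const 2).ennreal_ofReal).const_mul _),
              lintegral_const_mul _ (((hfij i).pow_const 2).ennreal_ofReal),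
              lintegral_const_mul _ (((hgi).pow_const 2).ennreal_ofReal)]
        _ ≤ 2 * ((N : ℝ≥0∞)⁻¹ * B) + 2 * ((N : ℝ≥0∞)⁻¹ * A) := by
            rw [hmap1, hmap2, ← mul_assoc, ← mul_assoc]
            gcongr
    have hI2 : ∫⁻ ω, ENNReal.ofReal (T2 ω ^ 2) ∂P ≤ (N : ℝ≥0∞)⁻¹ * A := by
      have hNne : (N:ℝ) ≠ 0 := ne_of_gt hNR
      have hg0 : ∀ x, 0 ≤ g x := fun x => integral_nonneg (hf0 x)
      have hfm2 : Measurable (fun p : EuclideanSpace ℝ (Fin d) × EuclideanSpace ℝ (Fin d) =>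
          (f p.1 p.2) ^ 2) := hf.pow_const 2
      have hAprod : ∫⁻ p, ENNReal.ofReal ((f p.1 p.2) ^ 2) ∂(μ.prod μ) = A :=
        lintegral_prod _ (hfm2.ennreal_ofReal.aemeasurable)
      have hfsq_int : Integrable (fun p : EuclideanSpace ℝ (Fin d) × EuclideanSpace ℝ (Fin d) =>
          (f p.1 p.2) ^ 2) (μ.prod μ) :=
        aux_integrable_of_lintegral hfm2 (fun p => sq_nonneg _) (by rw [hAprod]; exact hA)
      have hf_int : Integrable (fun p : EuclideanSpace ℝ (Fin d) × EuclideanSpace ℝ (Fin d) =>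
          f p.1 p.2) (μ.prod μ) := by
        refine Integrable.mono' ((integrable_const 1).add hfsq_int) hf.aestronglyMeasurable
          (ae_of_all _ fun p => ?_)
        simp only [Pi.add_apply]
        rw [Real.norm_eq_abs, abs_of_nonneg (hf0 _ _)]
        nlinarith [sq_nonneg (f p.1 p.2 - 1)]
      have hgsq_int : Integrable (fun x => g x ^ 2) μ :=
        aux_integrable_of_lintegral (hgm.pow_const 2) (fun x => sq_nonneg _)
          (((lintegral_mono fun x => aux_jensen hf.of_uncurry_left (hf0 x)).trans_lt
            (lt_top_iff_ne_top.2 hA)).ne)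
      have hFm : Measurable (fun p : EuclideanSpace ℝ (Fin d) × EuclideanSpace ℝ (Fin d) =>
          f p.1 p.2 - g p.1) := hf.sub (hgm.comp measurable_fst)
      have hmapfst : (μ.prod μ).map Prod.fst = μ := by
        rw [Measure.map_fst_prod]; simp
      have hgfst_int : Integrable (fun p : EuclideanSpace ℝ (Fin d) × EuclideanSpace ℝ (Fin d) =>
          g p.1 ^ 2) (μ.prod μ) := by
        have h2 := hgsq_int
        rw [← hmapfst] at h2
        exact (integrable_map_measure (hgm.pow_const 2).aestronglyMeasurable
          measurable_fst.aemeasurable).mp h2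
      have hFsq_int : Integrable (fun p : EuclideanSpace ℝ (Fin d) × EuclideanSpace ℝ (Fin d) =>
          (f p.1 p.2 - g p.1) ^ 2) (μ.prod μ) := by
        refine Integrable.mono' ((hfsq_int.const_mul 2).add (hgfst_int.const_mul 2))
          ((hFm.pow_const 2)).aestronglyMeasurable (ae_of_all _ fun p => ?_)
        simp only [Pi.add_apply]
        rw [Real.norm_eq_abs, abs_of_nonneg (sq_nonneg _)]
        nlinarith [sq_nonneg (f p.1 p.2 + g p.1)]
      have haeI : ∀ᵐ x ∂μ, Integrable (fun y => f x y) μ := hf_int.prod_right_ae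
      have haeI2 : ∀ᵐ x ∂μ, Integrable (fun y => f x y ^ 2) μ := hfsq_int.prod_right_ae
      set V := ∫ p, (f p.1 p.2 - g p.1) ^ 2 ∂(μ.prod μ) with hV_def
      set Vf := ∫ p, (f p.1 p.2) ^ 2 ∂(μ.prod μ) with hVf_def
      have hV0 : 0 ≤ V := integral_nonneg fun p => sq_nonneg _
      have hVle : V ≤ Vf := by
        rw [hV_def, hVf_def, integral_prod _ hFsq_int, integral_prod _ hfsq_int]
        refine integral_mono_ae hFsq_int.integral_prod_left hfsq_int.integral_prod_left ?_
        filter_upwards [haeI, haeI2] with x h1 h2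
        exact aux_variance_le h1 h2
      have hVfR : ENNReal.ofReal Vf = ∫⁻ p, ENNReal.ofReal ((f p.1 p.2) ^ 2) ∂(μ.prod μ) :=
        ofReal_integral_eq_lintegral_ofReal hfsq_int (ae_of_all _ fun p => sq_nonneg _)
      -- laws of pairs and triples
      have hpair : ∀ j k : Fin N, j ≠ k →
          P.map (fun ω => (ξ j ω, ξ k ω)) = μ.prod μ := by
        intro j k hjk
        rw [(indepFun_iff_map_prod_eq_prod_map_map (hξm j).aemeasurable
          (hξm k).aemeasurable).mp (hindep.indepFun hjk), hlaw j, hlaw k]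
      have htrip : ∀ j k : Fin N, j ≠ i → k ≠ i → j ≠ k →
          P.map (fun ω => (ξ i ω, (ξ j ω, ξ k ω))) = μ.prod (μ.prod μ) := by
        intro j k hji hki hjk
        have h1 : IndepFun (fun ω => (ξ j ω, ξ k ω)) (ξ i) P :=
          hindep.indepFun_prodMk hξm j k i hji hki
        rw [(indepFun_iff_map_prod_eq_prod_map_map (hξm i).aemeasurable
          ((hξm j).prodMk (hξm k)).aemeasurable).mp h1.symm, hlaw i, hpair j k hjk]
      set Fo : Fin N → Ω → ℝ := fun j ω => f (ξ i ω) (ξ j ω) - g (ξ i ω) with hFo_def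
      have hFom : ∀ j, Measurable (Fo j) := fun j => (hfij j).sub hgi
      have hdiagpair : ∀ j : Fin N, j ≠ i →
          Integrable (fun ω => Fo j ω ^ 2) P ∧ ∫ ω, Fo j ω ^ 2 ∂P = V := by
        intro j hji
        have hm : Measurable (fun ω => (ξ i ω, ξ j ω)) := (hξm i).prodMk (hξm j)
        have hmap := hpair i j (Ne.symm hji)
        constructor
        · have h2 := hFsq_int
          rw [← hmap] at h2
          exact (integrable_map_measure (hFm.pow_const 2).aestronglyMeasurable
            hm.aemeasurable).mp h2
        · calc ∫ ω, Fo j ω ^ 2 ∂P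
              = ∫ p, (f p.1 p.2 - g p.1) ^ 2 ∂(P.map (fun ω => (ξ i ω, ξ j ω))) :=
                (integral_map hm.aemeasurable (hFm.pow_const 2).aestronglyMeasurable).symm
            _ = V := by rw [hmap]
      have hcross : ∀ j k : Fin N, j ≠ i → k ≠ i → j ≠ k →
          Integrable (fun ω => Fo j ω * Fo k ω) P ∧ ∫ ω, Fo j ω * Fo k ω ∂P = 0 := by
        intro j k hji hki hjk
        set ψ : EuclideanSpace ℝ (Fin d) ×
            (EuclideanSpace ℝ (Fin d) × EuclideanSpace ℝ (Fin d)) → ℝ :=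
          fun q => (f q.1 q.2.1 - g q.1) * (f q.1 q.2.2 - g q.1) with hψ_def
        have hψm : Measurable ψ :=
          ((hf.comp (measurable_fst.prodMk (measurable_fst.comp measurable_snd))).sub
            (hgm.comp measurable_fst)).mul
          ((hf.comp (measurable_fst.prodMk (measurable_snd.comp measurable_snd))).sub
            (hgm.comp measurable_fst))
        have mp1 : MeasurePreserving
            (fun q : EuclideanSpace ℝ (Fin d) ×
              (EuclideanSpace ℝ (Fin d) × EuclideanSpace ℝ (Fin d)) => (q.1, q.2.1))
            (μ.prod (μ.prod μ)) (μ.prod μ) :=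
          (MeasurePreserving.id μ).prod
            (⟨measurable_fst, by rw [Measure.map_fst_prod]; simp⟩ :
              MeasurePreserving Prod.fst (μ.prod μ) μ)
        have mp2 : MeasurePreserving
            (fun q : EuclideanSpace ℝ (Fin d) ×
              (EuclideanSpace ℝ (Fin d) × EuclideanSpace ℝ (Fin d)) => (q.1, q.2.2))
            (μ.prod (μ.prod μ)) (μ.prod μ) :=
          (MeasurePreserving.id μ).prod
            (⟨measurable_snd, by rw [Measure.map_snd_prod]; simp⟩ :
              MeasurePreserving Prod.snd (μ.prod μ) μ)
        have hsq1 : Integrable (fun q : EuclideanSpace ℝ (Fin d) ×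
            (EuclideanSpace ℝ (Fin d) × EuclideanSpace ℝ (Fin d)) =>
            (f q.1 q.2.1 - g q.1) ^ 2) (μ.prod (μ.prod μ)) := by
          have h2 := hFsq_int
          rw [← mp1.map_eq] at h2
          exact (integrable_map_measure (hFm.pow_const 2).aestronglyMeasurable
            mp1.measurable.aemeasurable).mp h2
        have hsq2 : Integrable (fun q : EuclideanSpace ℝ (Fin d) ×
            (EuclideanSpace ℝ (Fin d) × EuclideanSpace ℝ (Fin d)) =>
            (f q.1 q.2.2 - g q.1) ^ 2) (μ.prod (μ.prod μ)) := by
          have h2 := hFsq_int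
          rw [← mp2.map_eq] at h2
          exact (integrable_map_measure (hFm.pow_const 2).aestronglyMeasurable
            mp2.measurable.aemeasurable).mp h2
        have hψ_int : Integrable ψ (μ.prod (μ.prod μ)) := by
          refine Integrable.mono' (hsq1.add hsq2) hψm.aestronglyMeasurable
            (ae_of_all _ fun q => ?_)
          simp only [Pi.add_apply]
          rw [Real.norm_eq_abs, hψ_def, abs_mul]
          nlinarith [sq_nonneg (|f q.1 q.2.1 - g q.1| - |f q.1 q.2.2 - g q.1|),
            sq_abs (f q.1 q.2.1 - g q.1), sq_abs (f q.1 q.2.2 - g q.1),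
            abs_nonneg (f q.1 q.2.1 - g q.1), abs_nonneg (f q.1 q.2.2 - g q.1)]
        have htm : Measurable (fun ω => (ξ i ω, (ξ j ω, ξ k ω))) :=
          (hξm i).prodMk ((hξm j).prodMk (hξm k))
        have hmap := htrip j k hji hki hjk
        have h0 : ∫ q, ψ q ∂(μ.prod (μ.prod μ)) = 0 := by
          rw [integral_prod _ hψ_int]
          have hz : ∀ᵐ x ∂μ, (∫ yz, ψ (x, yz) ∂(μ.prod μ)) = 0 := by
            filter_upwards [haeI] with x h1
            have : (∫ yz, ψ (x, yz) ∂(μ.prod μ))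
                = (∫ y, (f x y - g x) ∂μ) * (∫ y, (f x y - g x) ∂μ) :=
              integral_prod_mul (fun y => f x y - g x) (fun y => f x y - g x)
            rw [this, integral_sub h1 (integrable_const _), integral_const]
            simp [hg_def]
          rw [integral_congr_ae hz, integral_zero]
        constructor
        · have h2 := hψ_int
          rw [← hmap] at h2
          exact (integrable_map_measure hψm.aestronglyMeasurable htm.aemeasurable).mp h2
        · calc ∫ ω, Fo j ω * Fo k ω ∂P
              = ∫ q, ψ q ∂(P.map (fun ω => (ξ i ω, (ξ j ω, ξ k ω)))) :=
                (integral_map htm.aemeasurable hψm.aestronglyMeasurable).symm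
            _ = 0 := by rw [hmap, h0]
      -- the sum
      have hsum_eq : (fun ω => (∑ j ∈ Finset.univ.erase i, Fo j ω) ^ 2)
          = fun ω => ∑ j ∈ Finset.univ.erase i, ∑ k ∈ Finset.univ.erase i,
              Fo j ω * Fo k ω := by
        funext ω; rw [sq, Finset.sum_mul_sum]
      have hprod_int : ∀ j ∈ Finset.univ.erase i, ∀ k ∈ Finset.univ.erase i,
          Integrable (fun ω => Fo j ω * Fo k ω) P := by
        intro j hj k hk
        by_cases hjk : j = k
        · subst hjk
          have := (hdiagpair j (Finset.ne_of_mem_erase hj)).1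
          simpa [sq] using this
        · exact (hcross j k (Finset.ne_of_mem_erase hj) (Finset.ne_of_mem_erase hk) hjk).1
      have hSint : Integrable (fun ω => (∑ j ∈ Finset.univ.erase i, Fo j ω) ^ 2) P := by
        rw [hsum_eq]
        exact integrable_finset_sum _ fun j hj =>
          integrable_finset_sum _ fun k hk => hprod_int j hj k hk
      have hSval : ∫ ω, (∑ j ∈ Finset.univ.erase i, Fo j ω) ^ 2 ∂P
          = ((Finset.univ.erase i).card : ℝ) * V := by
        rw [hsum_eq, integral_finset_sum _ (fun j hj =>
          integrable_finset_sum _ fun k hk => hprod_int j hj k hk)]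
        have : ∀ j ∈ Finset.univ.erase i,
            ∫ ω, (∑ k ∈ Finset.univ.erase i, Fo j ω * Fo k ω) ∂P = V := by
          intro j hj
          rw [integral_finset_sum _ (fun k hk => hprod_int j hj k hk),
            Finset.sum_eq_single j]
          · have := (hdiagpair j (Finset.ne_of_mem_erase hj)).2
            rw [← this]
            congr 1
            funext ω
            rw [sq]
          · intro k hk hkj
            exact (hcross j k (Finset.ne_of_mem_erase hj) (Finset.ne_of_mem_erase hk)
              (Ne.symm hkj)).2
          · intro hj'; exact absurd hj hj'
        rw [Finset.sum_congr rfl this, Finset.sum_const, nsmul_eq_mul]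
      have hT2eq : (fun ω => T2 ω ^ 2)
          = fun ω => ((N:ℝ)⁻¹) ^ 2 * (∑ j ∈ Finset.univ.erase i, Fo j ω) ^ 2 := by
        funext ω
        rw [hT2_def, hFo_def, mul_pow]
      have hT2sq_int : Integrable (fun ω => T2 ω ^ 2) P := by
        rw [hT2eq]; exact hSint.const_mul _
      have hT2val : ∫ ω, T2 ω ^ 2 ∂P = ((N:ℝ)⁻¹) ^ 2 * (((N:ℝ) - 1) * V) := by
        rw [hT2eq, integral_const_mul, hSval, hcard]
      calc ∫⁻ ω, ENNReal.ofReal (T2 ω ^ 2) ∂P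
          = ENNReal.ofReal (∫ ω, T2 ω ^ 2 ∂P) :=
            (ofReal_integral_eq_lintegral_ofReal hT2sq_int
              (ae_of_all _ fun ω => sq_nonneg _)).symm
        _ ≤ ENNReal.ofReal ((N:ℝ)⁻¹ * Vf) := by
            refine ENNReal.ofReal_le_ofReal ?_
            rw [hT2val]
            calc ((N:ℝ)⁻¹) ^ 2 * (((N:ℝ) - 1) * V)
                ≤ ((N:ℝ)⁻¹) ^ 2 * ((N:ℝ) * V) :=
                  mul_le_mul_of_nonneg_left
                    (mul_le_mul_of_nonneg_right (by linarith) hV0) (by positivity)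
              _ = (N:ℝ)⁻¹ * V := by
                  field_simp
              _ ≤ (N:ℝ)⁻¹ * Vf := mul_le_mul_of_nonneg_left hVle (by positivity)
        _ = (N : ℝ≥0∞)⁻¹ * A := by
            rw [ENNReal.ofReal_mul (by positivity), ENNReal.ofReal_inv_of_pos hNR,
              ENNReal.ofReal_natCast, hVfR, hAprod]
    calc (∫⁻ ω, ENNReal.ofReal
        (((∫ y, f (ξ i ω) y ∂((N : ℝ≥0∞)⁻¹ • ∑ j : Fin N, Measure.dirac (ξ j ω))) -
          ∫ y, f (ξ i ω) y ∂ν) ^ 2) ∂P)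
        = ∫⁻ ω, ENNReal.ofReal ((T1 ω + T2 ω + T3 ω) ^ 2) ∂P :=
          lintegral_congr fun ω => by rw [← hdecomp ω]
      _ ≤ ∫⁻ ω, (3 * ENNReal.ofReal (T1 ω ^ 2) + 3 * ENNReal.ofReal (T2 ω ^ 2)
            + 3 * ENNReal.ofReal (T3 ω ^ 2)) ∂P :=
          lintegral_mono fun ω => aux_ofReal_sq_add3 _ _ _
      _ = 3 * ∫⁻ ω, ENNReal.ofReal (T1 ω ^ 2) ∂P + 3 * ∫⁻ ω, ENNReal.ofReal (T2 ω ^ 2) ∂P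
            + 3 * ∫⁻ ω, ENNReal.ofReal (T3 ω ^ 2) ∂P := by
          rw [lintegral_add_right _ (((hT3m.pow_const 2).ennreal_ofReal).const_mul 3),
            lintegral_add_right _ (((hT2m.pow_const 2).ennreal_ofReal).const_mul 3),
            lintegral_const_mul 3 ((hT1m.pow_const 2).ennreal_ofReal),
            lintegral_const_mul 3 ((hT2m.pow_const 2).ennreal_ofReal),
            lintegral_const_mul 3 ((hT3m.pow_const 2).ennreal_ofReal)]
      _ ≤ 3 * D + 3 * ((N : ℝ≥0∞)⁻¹ * A)
            + 3 * (2 * ((N : ℝ≥0∞)⁻¹ * B) + 2 * ((N : ℝ≥0∞)⁻¹ * A)) := by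
          gcongr
          exact le_of_eq hI1
      _ = 3 * D + 9 * ((N : ℝ≥0∞)⁻¹ * A) + 6 * ((N : ℝ≥0∞)⁻¹ * B) := by ring
  have hC : ENNReal.ofReal (100:ℝ) = 100 := by
    rw [show (100:ℝ) = ((100:ℕ):ℝ) by norm_num, ENNReal.ofReal_natCast]
    norm_num
  constructor
  · refine (key μbar hμbar).trans ?_
    rw [hC]
    set Db := ∫⁻ x, ENNReal.ofReal (((∫ y, f x y ∂μ) - ∫ y, f x y ∂μbar) ^ 2) ∂μ
    set Bh := ∫⁻ x, ENNReal.ofReal ((∫ y, f x y ∂μbar) ^ 2) ∂μ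
    calc 3 * Db + 9 * ((N : ℝ≥0∞)⁻¹ * A) + 6 * ((N : ℝ≥0∞)⁻¹ * B)
        ≤ 100 * Db + 100 * ((N : ℝ≥0∞)⁻¹ * A) + 100 * ((N : ℝ≥0∞)⁻¹ * B) := by
          gcongr <;> norm_num
      _ ≤ 100 * Db + 100 * ((N : ℝ≥0∞)⁻¹ * A) + 100 * ((N : ℝ≥0∞)⁻¹ * B)
            + 100 * ((N : ℝ≥0∞)⁻¹ * Bh) := le_self_add
      _ = 100 * (Db + (N : ℝ≥0∞)⁻¹ * A + (N : ℝ≥0∞)⁻¹ * Bh + (N : ℝ≥0∞)⁻¹ * B) := by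
          ring
  · refine (key μ hμ).trans ?_
    rw [hC]
    have hD0 : (∫⁻ x, ENNReal.ofReal (((∫ y, f x y ∂μ) - ∫ y, f x y ∂μ) ^ 2) ∂μ) = 0 := by
      simp
    rw [hD0]
    calc 3 * (0:ℝ≥0∞) + 9 * ((N : ℝ≥0∞)⁻¹ * A) + 6 * ((N : ℝ≥0∞)⁻¹ * B)
        ≤ 3 * 0 + 100 * ((N : ℝ≥0∞)⁻¹ * A) + 100 * ((N : ℝ≥0∞)⁻¹ * B) := by
          gcongr <;> norm_num
      _ = 100 * (N : ℝ≥0∞)⁻¹ * (A + B) := by ring
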